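/- arXiv:1606.06322 — 3 statements merged into one kernel-verified Lean document; each statement's English description precedes it below -/
import Mathlib

section
/- Let j_1, j_2, j_3, j_4, j_5, j_6 be nonnegative half-integers with j_1 = j_5 + j_6 ≥ 3 and j_2 = j_3, such that the four triples (h, j_2, j_3), (h, j_5, j_6), (j_4, j_2, j_6), (j_4, j_5, j_3) satisfy the triangle condition for both h = j_1 and h = j_1 - 1. If the Wigner 6j-symbol {j_1-1, j_2, j_3; j_4, j_5, j_6} vanishes, then both {j_1-2, j_2, j_3; j_4, j_5, j_6} and {j_1-3, j_2, j_3; j_4, j_5, j_6} are nonzero. -/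
/-- `x` is a half-integer. -/
def IsHalfInt (x : ℝ) : Prop := ∃ k : ℤ, x = k / 2

/-- The triangle condition for three half-integers. -/
def TriangleCond (a b c : ℝ) : Prop :=
  (∃ k : ℤ, a + b + c = (k : ℝ)) ∧ |a - b| ≤ c ∧ c ≤ a + b

/-- `(a, b, c)` is a degenerate triangle: one of the triangle inequalities is an
equality. -/
def DegenTriangle (a b c : ℝ) : Prop := |a - b| = c ∨ c = a + b

/-- The four triples attached to the `6j`-symbol `{j₁ j₂ j₃; j₄ j₅ j₆}` all satisfy
the triangle condition. -/
def AllTriangles (j₁ j₂ j₃ j₄ j₅ j₆ : ℝ) : Prop :=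
  TriangleCond j₁ j₂ j₃ ∧ TriangleCond j₁ j₅ j₆ ∧ TriangleCond j₄ j₂ j₆ ∧
    TriangleCond j₄ j₅ j₃

/-- The coefficient `E` of the Biedenharn–Elliott three-term recurrence. -/
noncomputable def Ecoef (i₂ i₃ i₅ i₆ i₁ : ℝ) : ℝ :=
  Real.sqrt ((i₁ ^ 2 - (i₂ - i₃) ^ 2) * ((i₂ + i₃ + 1) ^ 2 - i₁ ^ 2) *
    (i₁ ^ 2 - (i₅ - i₆) ^ 2) * ((i₅ + i₆ + 1) ^ 2 - i₁ ^ 2))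

/-- The coefficient `F` of the Biedenharn–Elliott three-term recurrence. -/
def Fcoef (i₂ i₃ i₄ i₅ i₆ i₁ : ℝ) : ℝ :=
  (2 * i₁ + 1) *
    (i₁ * (i₁ + 1) * (-(i₁ * (i₁ + 1)) + i₂ * (i₂ + 1) + i₃ * (i₃ + 1))
      + i₅ * (i₅ + 1) * (i₁ * (i₁ + 1) + i₂ * (i₂ + 1) - i₃ * (i₃ + 1))
      + i₆ * (i₆ + 1) * (i₁ * (i₁ + 1) - i₂ * (i₂ + 1) + i₃ * (i₃ + 1))
      - 2 * i₁ * (i₁ + 1) * i₄ * (i₄ + 1))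

/-- Proposition 2.2 of the paper, stated for an abstract function `W` (the Wigner
`6j`-symbol) satisfying the vanishing property, the non-vanishing property for
degenerate triangles, and the Biedenharn–Elliott three-term recurrence.

If `j₁ = j₅ + j₆ ≥ 3`, `j₂ = j₃`, all four triples satisfy the triangle condition
for `h = j₁` and `h = j₁ - 1`, and `W (j₁-1) j₂ j₃ j₄ j₅ j₆ = 0`, then both
`W (j₁-2) j₂ j₃ j₄ j₅ j₆` and `W (j₁-3) j₂ j₃ j₄ j₅ j₆` are nonzero. -/
theorem stmt_5 (W : ℝ → ℝ → ℝ → ℝ → ℝ → ℝ → ℝ)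
    (hvanish : ∀ a b c d e f : ℝ, ¬ AllTriangles a b c d e f → W a b c d e f = 0)
    (hdegen : ∀ a b c d e f : ℝ, AllTriangles a b c d e f →
      (DegenTriangle a b c ∨ DegenTriangle a e f ∨ DegenTriangle d b f ∨
        DegenTriangle d e c) → W a b c d e f ≠ 0)
    (hrec : ∀ i₁ i₂ i₃ i₄ i₅ i₆ : ℝ,
      i₁ * Ecoef i₂ i₃ i₅ i₆ (i₁ + 1) * W (i₁ + 1) i₂ i₃ i₄ i₅ i₆
        + Fcoef i₂ i₃ i₄ i₅ i₆ i₁ * W i₁ i₂ i₃ i₄ i₅ i₆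
        + (i₁ + 1) * Ecoef i₂ i₃ i₅ i₆ i₁ * W (i₁ - 1) i₂ i₃ i₄ i₅ i₆ = 0)
    (j₁ j₂ j₃ j₄ j₅ j₆ : ℝ)
    (half₁ : IsHalfInt j₁) (half₂ : IsHalfInt j₂) (half₃ : IsHalfInt j₃)
    (half₄ : IsHalfInt j₄) (half₅ : IsHalfInt j₅) (half₆ : IsHalfInt j₆)
    (n₁ : 0 ≤ j₁) (n₂ : 0 ≤ j₂) (n₃ : 0 ≤ j₃) (n₄ : 0 ≤ j₄) (n₅ : 0 ≤ j₅)
    (n₆ : 0 ≤ j₆)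
    (hsum : j₁ = j₅ + j₆) (h3 : 3 ≤ j₁) (h23 : j₂ = j₃)
    (htri : ∀ h : ℝ, h = j₁ ∨ h = j₁ - 1 →
      TriangleCond h j₂ j₃ ∧ TriangleCond h j₅ j₆ ∧ TriangleCond j₄ j₂ j₆ ∧
        TriangleCond j₄ j₅ j₃)
    (hzero : W (j₁ - 1) j₂ j₃ j₄ j₅ j₆ = 0) :
    W (j₁ - 2) j₂ j₃ j₄ j₅ j₆ ≠ 0 ∧ W (j₁ - 3) j₂ j₃ j₄ j₅ j₆ ≠ 0 := by
  subst h23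
  have hj : (0:ℝ) < j₁ := by linarith
  obtain ⟨⟨_, habs1, _⟩, ⟨_, habs2, hsum2⟩, _, _⟩ := htri j₁ (Or.inl rfl)
  obtain ⟨_, ⟨_, habs2', hsum2'⟩, _, _⟩ := htri (j₁-1) (Or.inr rfl)
  have h12 : j₁ ≤ j₂ + j₂ := by
    have := le_abs_self (j₁ - j₂); linarith
  have hab := abs_le.mp habs2'
  have h56a : j₅ - j₆ ≤ j₁ - 1 := by linarith [hab.1]
  have h56b : j₆ - j₅ ≤ j₁ - 1 := by linarith [hsum2']
  -- W j₁ ≠ 0 (degenerate triangle j₁ = j₅ + j₆)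
  have hWj : W j₁ j₂ j₂ j₄ j₅ j₆ ≠ 0 := by
    apply hdegen _ _ _ _ _ _ (htri j₁ (Or.inl rfl))
    refine Or.inr (Or.inl (Or.inl ?_))
    rw [show j₁ - j₅ = j₆ by linarith, abs_of_nonneg n₆]
  -- W (j₁+1) = 0
  have hWp : W (j₁+1) j₂ j₂ j₄ j₅ j₆ = 0 := by
    apply hvanish
    rintro ⟨_, ⟨_, habs, _⟩, _⟩
    have := le_abs_self (j₁ + 1 - j₅)
    linarith
  -- E coefficient at j₁ is positive
  have hEpos : 0 < Ecoef j₂ j₂ j₅ j₆ j₁ := by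
    unfold Ecoef
    apply Real.sqrt_pos.mpr
    have p1 : 0 < j₁^2 - (j₂ - j₂)^2 := by nlinarith
    have p2 : 0 < (j₂ + j₂ + 1)^2 - j₁^2 := by nlinarith
    have p3 : 0 < j₁^2 - (j₅ - j₆)^2 := by
      nlinarith [mul_nonneg (by linarith : (0:ℝ) ≤ j₁ - 1 - (j₅ - j₆))
        (by linarith : (0:ℝ) ≤ j₁ - 1 + (j₅ - j₆))]
    have p4 : 0 < (j₅ + j₆ + 1)^2 - j₁^2 := by nlinarith
    exact mul_pos (mul_pos (mul_pos p1 p2) p3) p4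
  -- From the recurrence at i₁ = j₁ : Fcoef at j₁ vanishes
  have h1 := hrec j₁ j₂ j₂ j₄ j₅ j₆
  rw [hWp, hzero] at h1
  have hFW : Fcoef j₂ j₂ j₄ j₅ j₆ j₁ * W j₁ j₂ j₂ j₄ j₅ j₆ = 0 := by linarith
  have hF0 : Fcoef j₂ j₂ j₄ j₅ j₆ j₁ = 0 := (mul_eq_zero.mp hFW).resolve_right hWj
  have hfac : Fcoef j₂ j₂ j₄ j₅ j₆ j₁ = (2*j₁+1)*(j₁*(j₁+1))*
      (-(j₁*(j₁+1)) + 2*(j₂*(j₂+1)) + j₅*(j₅+1) + j₆*(j₆+1) - 2*(j₄*(j₄+1))) := by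
    unfold Fcoef; ring
  rw [hfac] at hF0
  have hpos : (2*j₁+1)*(j₁*(j₁+1)) ≠ 0 := by positivity
  have hB : -(j₁*(j₁+1)) + 2*(j₂*(j₂+1)) + j₅*(j₅+1) + j₆*(j₆+1) - 2*(j₄*(j₄+1)) = 0 :=
    (mul_eq_zero.mp hF0).resolve_left hpos
  -- Recurrence at i₁ = j₁ - 1
  have h2 := hrec (j₁-1) j₂ j₂ j₄ j₅ j₆
  rw [show j₁ - 1 + 1 = j₁ by ring, show j₁ - 1 - 1 = j₁ - 2 by ring, hzero] at h2
  have hW2 : W (j₁-2) j₂ j₂ j₄ j₅ j₆ ≠ 0 := by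
    intro h0
    rw [h0] at h2
    have hz : (j₁-1) * Ecoef j₂ j₂ j₅ j₆ j₁ * W j₁ j₂ j₂ j₄ j₅ j₆ = 0 := by linarith
    exact mul_ne_zero (mul_ne_zero (by linarith : (j₁-1:ℝ) ≠ 0) (ne_of_gt hEpos)) hWj hz
  -- Recurrence at i₁ = j₁ - 2
  have h3' := hrec (j₁-2) j₂ j₂ j₄ j₅ j₆
  rw [show j₁ - 2 + 1 = j₁ - 1 by ring, show j₁ - 2 - 1 = j₁ - 3 by ring, hzero] at h3'
  have hF2 : Fcoef j₂ j₂ j₄ j₅ j₆ (j₁-2) = (2*j₁-3)*((j₁-2)*(j₁-1))*(4*j₁-2) := by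
    unfold Fcoef
    linear_combination ((2*(j₁-2)+1)*((j₁-2)*(j₁-1))) * hB
  have hF2ne : Fcoef j₂ j₂ j₄ j₅ j₆ (j₁-2) ≠ 0 := by
    rw [hF2]
    have hp : 0 < (2*j₁-3)*((j₁-2)*(j₁-1))*(4*j₁-2) :=
      mul_pos (mul_pos (by linarith) (mul_pos (by linarith) (by linarith))) (by linarith)
    exact ne_of_gt hp
  have hW3 : W (j₁-3) j₂ j₂ j₄ j₅ j₆ ≠ 0 := by
    intro h0
    rw [h0] at h3'
    have hz : Fcoef j₂ j₂ j₄ j₅ j₆ (j₁-2) * W (j₁-2) j₂ j₂ j₄ j₅ j₆ = 0 := by linarith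
    exact mul_ne_zero hF2ne hW2 hz
  exact ⟨hW2, hW3⟩
end

section
/- For m ≥ 1 and v = Σ_{i=0}^m a_i v_i, define the 2×(m+2) matrix X(v) with rows (−a_m·binom(m,m), a_{m-1}·binom(m,m-1), ..., a_0·binom(m,0), 0) and (0, −a_m·binom(m,m), ..., −a_1·binom(m,1), a_0·binom(m,0)), and the (m+2)×2 matrix Y(v) whose transpose has rows ((m+1)a_0, m·a_1, ..., 2a_{m-1}, a_m, 0) and (0, a_0, 2a_1, ..., m·a_{m-1}, (m+1)a_m). Then X(v_i)Y(v_j) − X(v_j)Y(v_i) = (−1)^i·binom(m,i)·(m+2)·I_2 if i + j = m, and equals 0 otherwise. -/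
set_option linter.unusedSectionVars false


open Matrix

variable (F : Type*) [Field F] [CharZero F]

/-- The `2 × (m+2)` matrix `X(v)` for `v = Σ a_i v_i`, with rows
`(-C(m,m)a_m, C(m,m-1)a_{m-1}, ..., C(m,0)a_0, 0)` and
`(0, -C(m,m)a_m, ..., -C(m,1)a_1, C(m,0)a_0)`. -/
def X9 (m : ℕ) (a : Fin (m + 1) → F) : Matrix (Fin 2) (Fin (m + 2)) F :=
  Matrix.of fun r k =>
    if r = 0 then
      if h : (k : ℕ) ≤ m then
        (-1 : F) ^ ((k : ℕ) + 1) * (m.choose (m - (k : ℕ))) * a ⟨m - (k : ℕ), by omega⟩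
      else 0
    else
      if h : 1 ≤ (k : ℕ) then
        (-1 : F) ^ (k : ℕ) * (m.choose (m + 1 - (k : ℕ))) *
          a ⟨m + 1 - (k : ℕ), by omega⟩
      else 0

/-- The `(m+2) × 2` matrix `Y(v)` for `v = Σ a_i v_i`, whose transpose has rows
`((m+1)a_0, m a_1, ..., 2a_{m-1}, a_m, 0)` and `(0, a_0, 2a_1, ..., (m+1)a_m)`. -/
def Y9 (m : ℕ) (a : Fin (m + 1) → F) : Matrix (Fin (m + 2)) (Fin 2) F :=
  Matrix.of fun k c =>
    if c = 0 then
      if h : (k : ℕ) ≤ m then ((m : F) + 1 - (k : ℕ)) * a ⟨(k : ℕ), by omega⟩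
      else 0
    else
      if h : 1 ≤ (k : ℕ) then ((k : ℕ) : F) * a ⟨(k : ℕ) - 1, by omega⟩
      else 0

section Aux
variable {F}


lemma X9s0 (m : ℕ) (i : Fin (m + 1)) (k : Fin (m + 2)) :
    X9 F m (Pi.single i 1) 0 k =
      if (k : ℕ) + (i : ℕ) = m then (-1 : F) ^ ((k : ℕ) + 1) * (m.choose (i : ℕ)) else 0 := by
  simp only [X9, of_apply, if_pos rfl, Pi.single_apply, Fin.ext_iff]
  have hi := i.isLt
  split_ifs with h h1 h2 h2 <;> first
    | (exfalso; omega)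
    | (rw [show m - (k:ℕ) = (i:ℕ) by omega]; ring)
    | simp

lemma X9s1 (m : ℕ) (i : Fin (m + 1)) (k : Fin (m + 2)) :
    X9 F m (Pi.single i 1) 1 k =
      if (k : ℕ) + (i : ℕ) = m + 1 then (-1 : F) ^ (k : ℕ) * (m.choose (i : ℕ)) else 0 := by
  simp only [X9, of_apply, if_neg (by decide : (1 : Fin 2) ≠ 0), Pi.single_apply, Fin.ext_iff]
  have hi := i.isLt
  split_ifs with h h1 h2 h2 <;> first
    | (exfalso; omega)
    | (rw [show m + 1 - (k:ℕ) = (i:ℕ) by omega]; ring)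
    | simp

lemma Y9s0 (m : ℕ) (j : Fin (m + 1)) (k : Fin (m + 2)) :
    Y9 F m (Pi.single j 1) k 0 =
      if (k : ℕ) = (j : ℕ) then ((m : F) + 1 - (j : ℕ)) else 0 := by
  simp only [Y9, of_apply, if_pos rfl, Pi.single_apply, Fin.ext_iff]
  have hj := j.isLt
  split_ifs with h h1 h2 h2 <;> first
    | (exfalso; omega)
    | (rw [show (k:ℕ) = (j:ℕ) by omega]; ring)
    | simp

lemma Y9s1 (m : ℕ) (j : Fin (m + 1)) (k : Fin (m + 2)) :
    Y9 F m (Pi.single j 1) k 1 =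
      if (k : ℕ) = (j : ℕ) + 1 then ((j : F) + 1) else 0 := by
  simp only [Y9, of_apply, if_neg (by decide : (1 : Fin 2) ≠ 0), Pi.single_apply, Fin.ext_iff]
  have hj := j.isLt
  split_ifs with h h1 h2 h2 <;> first
    | (exfalso; omega)
    | (rw [show (k:ℕ) = (j:ℕ)+1 by omega]; push_cast; ring)
    | simp

lemma sum_double_ite {N : ℕ} (P Q : Fin N → Prop) [∀ k, Decidable (P k)] [∀ k, Decidable (Q k)]
    (A B : Fin N → F) (k₀ : Fin N) (hP : ∀ k, P k ↔ k = k₀) :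
    ∑ k, (if P k then A k else 0) * (if Q k then B k else 0)
      = if Q k₀ then A k₀ * B k₀ else 0 := by
  rw [show (if Q k₀ then A k₀ * B k₀ else 0)
      = ∑ k, if k = k₀ then (if Q k then A k * B k else 0) else 0 by
    rw [Finset.sum_ite_eq' Finset.univ k₀ (fun k => if Q k then A k * B k else 0)]; simp]
  refine Finset.sum_congr rfl fun k _ => ?_
  by_cases h : P k
  · have hk := (hP k).mp h
    subst hk
    by_cases hq : Q k <;> simp [hq, h]
  · rw [if_neg h, zero_mul, if_neg (fun hk => h ((hP k).mpr hk))]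

lemma sgn (a b : ℕ) (hab : a % 2 = b % 2) : (-1 : F) ^ a = (-1 : F) ^ b := by
  rcases Nat.even_or_odd a with h | h
  · rw [h.neg_one_pow, (Nat.even_iff.2 (by rw [Nat.even_iff] at h; omega)).neg_one_pow]
  · rw [h.neg_one_pow, (Nat.odd_iff.2 (by rw [Nat.odd_iff] at h; omega)).neg_one_pow]

lemma P00 (m : ℕ) (i j : Fin (m + 1)) :
    (X9 F m (Pi.single i 1) * Y9 F m (Pi.single j 1)) 0 0
      = if (i : ℕ) + (j : ℕ) = m
        then (-1 : F) ^ ((j : ℕ) + 1) * (m.choose (i : ℕ)) * ((m : F) + 1 - (j : ℕ))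
        else 0 := by
  have hi := i.isLt
  rw [Matrix.mul_apply]
  simp only [X9s0, Y9s0]
  rw [sum_double_ite (fun k => (k : ℕ) + (i : ℕ) = m) (fun k => (k : ℕ) = (j : ℕ)) _ _
      ⟨m - (i : ℕ), by omega⟩ (fun k => by simp only [Fin.ext_iff]; omega)]
  by_cases h : (i : ℕ) + (j : ℕ) = m
  · rw [if_pos (by simp; omega), if_pos h]
    simp only []
    rw [show m - (i : ℕ) = (j : ℕ) by omega]
  · rw [if_neg (by simp; omega), if_neg h]

lemma P01 (m : ℕ) (i j : Fin (m + 1)) :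
    (X9 F m (Pi.single i 1) * Y9 F m (Pi.single j 1)) 0 1
      = if (i : ℕ) + (j : ℕ) + 1 = m
        then (-1 : F) ^ (j : ℕ) * (m.choose (i : ℕ)) * ((j : F) + 1)
        else 0 := by
  have hi := i.isLt
  rw [Matrix.mul_apply]
  simp only [X9s0, Y9s1]
  rw [sum_double_ite (fun k => (k : ℕ) + (i : ℕ) = m) (fun k => (k : ℕ) = (j : ℕ) + 1) _ _
      ⟨m - (i : ℕ), by omega⟩ (fun k => by simp only [Fin.ext_iff]; omega)]
  by_cases h : (i : ℕ) + (j : ℕ) + 1 = m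
  · rw [if_pos (by simp; omega), if_pos h]
    simp only []
    rw [show m - (i : ℕ) + 1 = (j : ℕ) + 1 + 1 by omega, sgn ((j:ℕ)+1+1) (j:ℕ) (by omega)]
  · rw [if_neg (by simp; omega), if_neg h]

lemma P10 (m : ℕ) (i j : Fin (m + 1)) :
    (X9 F m (Pi.single i 1) * Y9 F m (Pi.single j 1)) 1 0
      = if (i : ℕ) + (j : ℕ) = m + 1
        then (-1 : F) ^ (j : ℕ) * (m.choose (i : ℕ)) * ((m : F) + 1 - (j : ℕ))
        else 0 := by
  have hi := i.isLt
  rw [Matrix.mul_apply]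
  simp only [X9s1, Y9s0]
  rw [sum_double_ite (fun k => (k : ℕ) + (i : ℕ) = m + 1) (fun k => (k : ℕ) = (j : ℕ)) _ _
      ⟨m + 1 - (i : ℕ), by omega⟩ (fun k => by simp only [Fin.ext_iff]; omega)]
  by_cases h : (i : ℕ) + (j : ℕ) = m + 1
  · rw [if_pos (by simp; omega), if_pos h]
    simp only []
    rw [show m + 1 - (i : ℕ) = (j : ℕ) by omega]
  · rw [if_neg (by simp; omega), if_neg h]

lemma P11 (m : ℕ) (i j : Fin (m + 1)) :
    (X9 F m (Pi.single i 1) * Y9 F m (Pi.single j 1)) 1 1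
      = if (i : ℕ) + (j : ℕ) = m
        then (-1 : F) ^ ((j : ℕ) + 1) * (m.choose (i : ℕ)) * ((j : F) + 1)
        else 0 := by
  have hi := i.isLt
  rw [Matrix.mul_apply]
  simp only [X9s1, Y9s1]
  rw [sum_double_ite (fun k => (k : ℕ) + (i : ℕ) = m + 1) (fun k => (k : ℕ) = (j : ℕ) + 1) _ _
      ⟨m + 1 - (i : ℕ), by omega⟩ (fun k => by simp only [Fin.ext_iff]; omega)]
  by_cases h : (i : ℕ) + (j : ℕ) = m
  · rw [if_pos (by simp; omega), if_pos h]
    simp only []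
    rw [show m + 1 - (i : ℕ) = (j : ℕ) + 1 by omega]
  · rw [if_neg (by simp; omega), if_neg h]

end Aux

/-- Verification of relation (funca) for the uniserial representation with socle
factors `V(1), V(m+1), V(1)` (`m = 2n - 1`):
`X(v_i)Y(v_j) - X(v_j)Y(v_i) = (-1)^i C(m,i) (m+2) I₂` if `i + j = m`, else `0`. -/

theorem stmt_9 (n m : ℕ) (hn : 1 ≤ n) (hm : m = 2 * n - 1)
    (i j : Fin (m + 1)) :
    X9 F m (Pi.single i 1) * Y9 F m (Pi.single j 1)
      - X9 F m (Pi.single j 1) * Y9 F m (Pi.single i 1) =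
    if (i : ℕ) + (j : ℕ) = m
      then ((-1 : F) ^ (i : ℕ) * (m.choose (i : ℕ)) * ((m : F) + 2)) •
        (1 : Matrix (Fin 2) (Fin 2) F)
      else 0 := by
  have hmo : m % 2 = 1 := by omega
  have hi := i.isLt
  have hj := j.isLt
  set R : Matrix (Fin 2) (Fin 2) F :=
    if (i : ℕ) + (j : ℕ) = m
      then ((-1 : F) ^ (i : ℕ) * (m.choose (i : ℕ)) * ((m : F) + 2)) •
        (1 : Matrix (Fin 2) (Fin 2) F)
      else 0 with hR
  have E00 : (X9 F m (Pi.single i 1) * Y9 F m (Pi.single j 1)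
      - X9 F m (Pi.single j 1) * Y9 F m (Pi.single i 1)) 0 0 = R 0 0 := by
    rw [Matrix.sub_apply, P00 m i j, P00 m j i, hR]
    by_cases h : (i : ℕ) + (j : ℕ) = m
    · rw [if_pos h, if_pos (by omega), if_pos h, Matrix.smul_apply, Matrix.one_apply_eq,
        smul_eq_mul, mul_one]
      have hC : (m.choose (j : ℕ) : F) = m.choose (i : ℕ) := by
        rw [show (j : ℕ) = m - (i : ℕ) by omega, Nat.choose_symm (by omega)]
      have hmF : (m : F) = ((i : ℕ) : F) + ((j : ℕ) : F) := by exact_mod_cast h.symm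
      rw [hC, sgn ((j : ℕ) + 1) (i : ℕ) (by omega), pow_succ, hmF]
      ring
    · rw [if_neg h, if_neg (by omega), if_neg h, Matrix.zero_apply, sub_zero]
  have E11 : (X9 F m (Pi.single i 1) * Y9 F m (Pi.single j 1)
      - X9 F m (Pi.single j 1) * Y9 F m (Pi.single i 1)) 1 1 = R 1 1 := by
    rw [Matrix.sub_apply, P11 m i j, P11 m j i, hR]
    by_cases h : (i : ℕ) + (j : ℕ) = m
    · rw [if_pos h, if_pos (by omega), if_pos h, Matrix.smul_apply, Matrix.one_apply_eq,
        smul_eq_mul, mul_one]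
      have hC : (m.choose (j : ℕ) : F) = m.choose (i : ℕ) := by
        rw [show (j : ℕ) = m - (i : ℕ) by omega, Nat.choose_symm (by omega)]
      have hmF : (m : F) = ((i : ℕ) : F) + ((j : ℕ) : F) := by exact_mod_cast h.symm
      rw [hC, sgn ((j : ℕ) + 1) (i : ℕ) (by omega), pow_succ, hmF]
      ring
    · rw [if_neg h, if_neg (by omega), if_neg h, Matrix.zero_apply, sub_zero]
  have hR01 : R 0 1 = 0 := by
    rw [hR]; split_ifs <;> simp [Matrix.one_apply]
  have hR10 : R 1 0 = 0 := by
    rw [hR]; split_ifs <;> simp [Matrix.one_apply]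
  have E01 : (X9 F m (Pi.single i 1) * Y9 F m (Pi.single j 1)
      - X9 F m (Pi.single j 1) * Y9 F m (Pi.single i 1)) 0 1 = R 0 1 := by
    rw [Matrix.sub_apply, P01 m i j, P01 m j i, hR01]
    by_cases h : (i : ℕ) + (j : ℕ) + 1 = m
    · rw [if_pos h, if_pos (by omega)]
      have hC2 : m.choose (j : ℕ) * ((i : ℕ) + 1) = m.choose (i : ℕ) * ((j : ℕ) + 1) := by
        rw [show (j : ℕ) = m - ((i : ℕ) + 1) by omega, Nat.choose_symm (by omega),
          Nat.choose_succ_right_eq, show m - ((i : ℕ) + 1) + 1 = m - (i : ℕ) by omega]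
      have hC2F : (m.choose (j : ℕ) : F) * (((i : ℕ) : F) + 1)
          = (m.choose (i : ℕ) : F) * (((j : ℕ) : F) + 1) := by exact_mod_cast hC2
      rw [sgn (j : ℕ) (i : ℕ) (by omega)]
      linear_combination (-1 : F) ^ ((i : ℕ) + 1) * hC2F
    · rw [if_neg h, if_neg (by omega), sub_zero]
  have E10 : (X9 F m (Pi.single i 1) * Y9 F m (Pi.single j 1)
      - X9 F m (Pi.single j 1) * Y9 F m (Pi.single i 1)) 1 0 = R 1 0 := by
    rw [Matrix.sub_apply, P10 m i j, P10 m j i, hR10]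
    by_cases h : (i : ℕ) + (j : ℕ) = m + 1
    · rw [if_pos h, if_pos (by omega)]
      have hC3 : m.choose (i : ℕ) * (i : ℕ) = m.choose (j : ℕ) * (j : ℕ) := by
        have h1 := Nat.choose_succ_right_eq m ((i : ℕ) - 1)
        rw [show (i : ℕ) - 1 + 1 = (i : ℕ) by omega] at h1
        rw [h1, show (j : ℕ) = m - ((i : ℕ) - 1) by omega, Nat.choose_symm (by omega)]
      have hC3F : (m.choose (i : ℕ) : F) * ((i : ℕ) : F)
          = (m.choose (j : ℕ) : F) * ((j : ℕ) : F) := by exact_mod_cast hC3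
      have hmF : (m : F) + 1 = ((i : ℕ) : F) + ((j : ℕ) : F) := by exact_mod_cast h.symm
      rw [sgn (j : ℕ) (i : ℕ) (by omega),
        show (m : F) + 1 - ((j : ℕ) : F) = ((i : ℕ) : F) by rw [hmF]; ring,
        show (m : F) + 1 - ((i : ℕ) : F) = ((j : ℕ) : F) by rw [hmF]; ring]
      linear_combination (-1 : F) ^ (i : ℕ) * hC3F
    · rw [if_neg h, if_neg (by omega), sub_zero]
  ext r c
  fin_cases r <;> fin_cases c
  · exact E00
  · exact E01
  · exact E10
  · exact E11
end

section
/- Let h_n be the Heisenberg Lie algebra of dimension 2n+1 with center z. Every nonzero ideal of the semidirect product g = sl(2) ⋉ h_n (with sl(2) acting so that z and h_n/z are irreducible sl(2)-modules) contains z. Consequently, every non-faithful representation of g factors through g/z ≅ sl(2) ⋉ V(2n−1). -/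
/-- Let `g` be a finite dimensional Lie algebra over a field `K` of characteristic
zero, containing an ideal `n` (the Heisenberg algebra `h_nn` of dimension
`2·nn + 1`) with `[n, n] = z`, where `z` is the (1-dimensional) center of `n`;
suppose `g ⧸ n` is simple (it is `sl(2)`) and the `g`-action is such that `z` and
`n ⧸ z` are irreducible (equivalently, the only ideals of `g` contained in `n` are
`⊥`, `z`, `n`).  Then every nonzero ideal of `g` contains `z`; consequently every
non-faithful representation `M` of `g` is annihilated by `z`, i.e. factors through
`g ⧸ z ≅ sl(2) ⋉ V(2·nn - 1)`. -/
theorem stmt_17 (K g : Type*) [Field K] [CharZero K]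
    [LieRing g] [LieAlgebra K g] [FiniteDimensional K g]
    (nn : ℕ) (hnn : 1 ≤ nn) (n z : LieIdeal K g)
    (hzn : z ≤ n)
    (hbr : ⁅n, n⁆ = z)
    (hzcentral : ∀ x ∈ z, ∀ y ∈ n, ⁅x, y⁆ = 0)
    (hcenter : ∀ x ∈ n, (∀ y ∈ n, ⁅x, y⁆ = 0) → x ∈ z)
    (hdimz : Module.finrank K z = 1)
    (hdimn : Module.finrank K n = 2 * nn + 1)
    (hirr : ∀ I : LieIdeal K g, I ≤ n → I = ⊥ ∨ I = z ∨ I = n)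
    (hsimple : LieAlgebra.IsSimple K (g ⧸ n))
    (M : Type*) [AddCommGroup M] [Module K M] [LieRingModule g M]
    [LieModule K g M]
    (hM : ∃ x : g, x ≠ 0 ∧ ∀ v : M, ⁅x, v⁆ = 0) :
    (∀ I : LieIdeal K g, I ≠ ⊥ → z ≤ I) ∧
    (∀ x ∈ z, ∀ v : M, ⁅x, v⁆ = 0) := by
  classical
  -- the quotient map as a Lie algebra morphism
  let π : g →ₗ⁅K⁆ g ⧸ n := { n.toSubmodule.mkQ with map_lie' := rfl }
  have hπ : ∀ x : g, π x = 0 ↔ x ∈ n := by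
    intro x
    show n.toSubmodule.mkQ x = 0 ↔ _
    rw [Submodule.mkQ_apply, Submodule.Quotient.mk_eq_zero]
    rfl
  have hπsurj : Function.Surjective π := Submodule.mkQ_surjective _
  have part1 : ∀ I : LieIdeal K g, I ≠ ⊥ → z ≤ I := by
    intro I hI
    rcases hirr (I ⊓ n) inf_le_right with hinf | hinf | hinf
    · -- I ⊓ n = ⊥
      rcases hsimple.eq_bot_or_eq_top (LieIdeal.map π I) with hm | hm
      · -- I ≤ n
        have hIn : I ≤ n := by
          intro x hx
          have hxk : x ∈ π.ker := LieIdeal.map_eq_bot_iff.1 hm hx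
          exact (hπ x).1 (LieHom.mem_ker.1 hxk)
        rcases hirr I hIn with h' | h' | h'
        · exact absurd h' hI
        · exact h'.ge
        · exact h' ▸ hzn
      · -- map π I = ⊤ : then g = I + n, deduce ⁅g, n⁆ ⊆ z, contradiction
        exfalso
        have hdecomp : ∀ x : g, ∃ a ∈ I, ∃ b ∈ n, x = a + b := by
          intro x
          have hx : π x ∈ LieIdeal.map π I := hm ▸ LieSubmodule.mem_top _
          obtain ⟨⟨a, haI⟩, ha⟩ := LieIdeal.mem_map_of_surjective hπsurj hx
          refine ⟨a, haI, x - a, ?_, by abel⟩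
          have ha' : π a = π x := ha
          exact (hπ _).1 (by rw [map_sub, ha', sub_self])
        have hbrz : ∀ x : g, ∀ y ∈ n, ⁅x, y⁆ ∈ z := by
          intro x y hy
          obtain ⟨a, ha, b, hb, rfl⟩ := hdecomp x
          rw [add_lie]
          apply z.add_mem
          · have h1 : ⁅a, y⁆ ∈ I := lie_mem_left K g I a y ha
            have h2 : ⁅a, y⁆ ∈ n := lie_mem_right K g n a y hy
            have h3 : ⁅a, y⁆ ∈ I ⊓ n := (LieSubmodule.mem_inf _ _ _).2 ⟨h1, h2⟩
            rw [hinf, LieSubmodule.mem_bot] at h3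
            rw [h3]
            exact z.zero_mem
          · have := LieSubmodule.lie_mem_lie hb hy
            rwa [hbr] at this
        -- choose w ∈ n \ z
        have hnz : ¬ (n ≤ z) := by
          intro hle
          have : Module.finrank K n ≤ Module.finrank K z :=
            Submodule.finrank_mono (by exact fun x hx => hle hx :
              n.toSubmodule ≤ z.toSubmodule)
          omega
        obtain ⟨w, hwn, hwz⟩ := SetLike.not_le_iff_exists.1 hnz
        have hw0 : w ≠ 0 := fun h => hwz (h ▸ z.zero_mem)
        -- the submodule z + K w is an ideal of g
        let Wsub : Submodule K g := z.toSubmodule ⊔ (K ∙ w)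
        have hWn : Wsub ≤ n.toSubmodule :=
          sup_le (fun x hx => hzn hx)
            ((Submodule.span_singleton_le_iff_mem _ _).2 hwn)
        have hzW : z.toSubmodule ≤ Wsub := le_sup_left
        let W : LieIdeal K g :=
          { Wsub with
            lie_mem := fun {x m} hm' => hzW (hbrz x m (hWn hm')) }
        have hwW : w ∈ W :=
          (le_sup_right : (K ∙ w) ≤ Wsub) (Submodule.mem_span_singleton_self w)
        rcases hirr W (fun x hx => hWn hx) with hW | hW | hW
        · rw [hW, LieSubmodule.mem_bot] at hwW
          exact hw0 hwW
        · rw [hW] at hwW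
          exact hwz hwW
        · -- dimension count: finrank n ≤ 2 < 2 nn + 1
          have hWfin : Module.finrank K Wsub ≤ 2 := by
            show Module.finrank K ↥(z.toSubmodule ⊔ (K ∙ w)) ≤ 2
            have h1 : Module.finrank K (K ∙ w) = 1 :=
              finrank_span_singleton hw0
            have h2 := Submodule.finrank_sup_add_finrank_inf_eq z.toSubmodule (K ∙ w)
            have h3 : Module.finrank K z.toSubmodule = 1 := hdimz
            omega
          have hn2 : Module.finrank K n ≤ 2 := by
            have hco : n.toSubmodule = Wsub := congrArg LieSubmodule.toSubmodule hW.symm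
            exact (hco ▸ hWfin : Module.finrank K n.toSubmodule ≤ 2)
          omega
    · -- I ⊓ n = z
      exact hinf ▸ inf_le_left
    · -- I ⊓ n = n
      exact le_trans hzn (hinf ▸ inf_le_left)
  refine ⟨part1, ?_⟩
  intro x hx v
  obtain ⟨x0, hx0, hx0'⟩ := hM
  have hker : (LieModule.ker K g M) ≠ ⊥ := by
    intro h
    have : x0 ∈ LieModule.ker K g M := (LieModule.mem_ker K g M x0).2 hx0'
    rw [h, LieSubmodule.mem_bot] at this
    exact hx0 this
  exact (LieModule.mem_ker K g M x).1 (part1 _ hker hx) v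
end
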